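/- arXiv:2102.08106 — 12 statements merged into one kernel-verified Lean document; each statement's English description precedes it below -/
import Mathlib

section
/- If A is T-normal, then A is T-EP, i.e., range(A) = range(T A* T) and A = A T* T. -/
open Matrix

/-- The four Penrose conditions: `X` is the Moore-Penrose inverse of `A`. -/
def IsMP {m n : ℕ} (A : Matrix (Fin m) (Fin n) ℂ) (X : Matrix (Fin n) (Fin m) ℂ) : Prop :=
  A * X * A = A ∧ X * A * X = X ∧ (A * X)ᴴ = A * X ∧ (X * A)ᴴ = X * A

/-- `A` is T-EP: range(A) = range(T Aᴴ T) and A = A Tᴴ T. -/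
def IsTEP {m n : ℕ} (T A : Matrix (Fin m) (Fin n) ℂ) : Prop :=
  LinearMap.range (Matrix.mulVecLin A) = LinearMap.range (Matrix.mulVecLin (T * Aᴴ * T)) ∧
    A = A * Tᴴ * T

lemma range_self_mul_conjTranspose {m n : ℕ} (M : Matrix (Fin m) (Fin n) ℂ) :
    LinearMap.range (Matrix.mulVecLin (M * Mᴴ)) = LinearMap.range (Matrix.mulVecLin M) := by
  open scoped ComplexOrder in
  have hle : LinearMap.range (Matrix.mulVecLin (M * Mᴴ)) ≤
      LinearMap.range (Matrix.mulVecLin M) := by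
    rw [Matrix.mulVecLin_mul]
    exact LinearMap.range_comp_le_range _ _
  refine Submodule.eq_of_le_of_finrank_le hle ?_
  have h1 := Matrix.rank_self_mul_conjTranspose M
  simp only [Matrix.rank] at h1
  omega

theorem stmt1 {m n : ℕ} (A T : Matrix (Fin m) (Fin n) ℂ)
    (hT : T = T * Tᴴ * T)
    (hnorm : A = T * Tᴴ * A ∧ A = A * Tᴴ * T ∧ A * Aᴴ * T = T * Aᴴ * A) :
    IsTEP T A := by
  obtain ⟨h1, h2, h3⟩ := hnorm
  refine ⟨?_, h2⟩
  have hA' : Aᴴ * T * Tᴴ = Aᴴ := by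
    conv_rhs => rw [h1]
    simp [Matrix.conjTranspose_mul, Matrix.mul_assoc]
  have key : (T * Aᴴ * T) * (T * Aᴴ * T)ᴴ = A * Aᴴ := by
    have : (T * Aᴴ * T) * (T * Aᴴ * T)ᴴ = T * Aᴴ * (T * Tᴴ * A) * Tᴴ := by
      simp [Matrix.conjTranspose_mul, Matrix.mul_assoc]
    rw [this, ← h1]
    have : T * Aᴴ * A * Tᴴ = A * Aᴴ * T * Tᴴ := by
      rw [← h3]
    rw [Matrix.mul_assoc T Aᴴ A] at this ⊢
    rw [this, Matrix.mul_assoc, Matrix.mul_assoc, ← Matrix.mul_assoc Aᴴ, hA']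
  calc LinearMap.range (Matrix.mulVecLin A)
      = LinearMap.range (Matrix.mulVecLin (A * Aᴴ)) := (range_self_mul_conjTranspose A).symm
    _ = LinearMap.range (Matrix.mulVecLin ((T * Aᴴ * T) * (T * Aᴴ * T)ᴴ)) := by rw [key]
    _ = LinearMap.range (Matrix.mulVecLin (T * Aᴴ * T)) := range_self_mul_conjTranspose _
end

section
/- If A is a T-EP matrix, then A = T T* A. -/
open Matrix

theorem stmt5 {m n : ℕ} (A T : Matrix (Fin m) (Fin n) ℂ)
    (hT : T = T * Tᴴ * T) (hTEP : IsTEP T A) :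
    A = T * Tᴴ * A := by
  have key : ∀ x, (T * Tᴴ * A).mulVec x = A.mulVec x := by
    intro x
    have hx : A.mulVec x ∈ LinearMap.range (Matrix.mulVecLin A) := ⟨x, rfl⟩
    rw [hTEP.1] at hx
    obtain ⟨y, hy⟩ := hx
    simp only [Matrix.mulVecLin_apply] at hy
    calc (T * Tᴴ * A) *ᵥ x = (T * Tᴴ) *ᵥ (A *ᵥ x) := by
          rw [Matrix.mulVec_mulVec]
      _ = (T * Tᴴ) *ᵥ ((T * Aᴴ * T) *ᵥ y) := by rw [hy]
      _ = (T * Tᴴ * (T * Aᴴ * T)) *ᵥ y := by rw [Matrix.mulVec_mulVec]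
      _ = (T * Aᴴ * T) *ᵥ y := by
          rw [show T * Tᴴ * (T * Aᴴ * T) = (T * Tᴴ * T) * Aᴴ * T by
            simp only [Matrix.mul_assoc], ← hT]
      _ = A *ᵥ x := hy
  ext i j
  have h := congrFun (key (Pi.single j 1)) i
  simpa [Matrix.mulVec_single] using h.symm
end

section
/- If A is a T-EP matrix, then the Moore-Penrose inverse of T* A equals A† T, i.e., (T* A)† = A† T. -/
open Matrix

theorem stmt7 {m n : ℕ} (A T : Matrix (Fin m) (Fin n) ℂ)
    (Ad : Matrix (Fin n) (Fin m) ℂ) (hT : T = T * Tᴴ * T) (hMP : IsMP A Ad)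
    (hTEP : IsTEP T A) :
    IsMP (Tᴴ * A) (Ad * T) := by
  obtain ⟨h1, h2, h3, h4⟩ := hMP
  obtain ⟨hr, _⟩ := hTEP
  -- key: T * Tᴴ * A = A
  have key : T * Tᴴ * A = A := by
    have hcol : ∀ x : Fin n → ℂ, (T * Tᴴ * A).mulVec x = A.mulVec x := by
      intro x
      have hx : A.mulVec x ∈ LinearMap.range (Matrix.mulVecLin (T * Aᴴ * T)) := by
        rw [← hr]; exact ⟨x, rfl⟩
      obtain ⟨y, hy⟩ := hx
      have hy' : (T * Aᴴ * T).mulVec y = A.mulVec x := hy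
      calc (T * Tᴴ * A).mulVec x = (T * Tᴴ).mulVec (A.mulVec x) := by
            rw [Matrix.mulVec_mulVec]
        _ = (T * Tᴴ).mulVec ((T * Aᴴ * T).mulVec y) := by rw [hy']
        _ = (T * Tᴴ * (T * Aᴴ * T)).mulVec y := by rw [Matrix.mulVec_mulVec]
        _ = (T * Aᴴ * T).mulVec y := by
            rw [show T * Tᴴ * (T * Aᴴ * T) = (T * Tᴴ * T) * Aᴴ * T by
              simp only [Matrix.mul_assoc], ← hT]
        _ = A.mulVec x := hy'
    ext i j
    have := congrFun (hcol (Pi.single j 1)) i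
    simpa [Matrix.mulVec_single] using this
  refine ⟨?_, ?_, ?_, ?_⟩
  · calc Tᴴ * A * (Ad * T) * (Tᴴ * A)
        = Tᴴ * (A * Ad * (T * Tᴴ * A)) := by simp only [Matrix.mul_assoc]
      _ = Tᴴ * (A * Ad * A) := by rw [key]
      _ = Tᴴ * A := by rw [h1]
  · calc Ad * T * (Tᴴ * A) * (Ad * T)
        = Ad * (T * Tᴴ * A) * (Ad * T) := by simp only [Matrix.mul_assoc]
      _ = Ad * A * Ad * T := by rw [key]; simp only [Matrix.mul_assoc]
      _ = Ad * T := by rw [h2]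
  · have e : Tᴴ * A * (Ad * T) = Tᴴ * (A * Ad) * T := by
      rw [Matrix.mul_assoc Tᴴ (A * Ad) T, Matrix.mul_assoc A Ad T, Matrix.mul_assoc]
    rw [e, Matrix.conjTranspose_mul (Tᴴ * (A * Ad)) T,
      Matrix.conjTranspose_mul Tᴴ (A * Ad), h3,
      Matrix.conjTranspose_conjTranspose]
    simp only [Matrix.mul_assoc]
  · have e : Ad * T * (Tᴴ * A) = Ad * A := by
      rw [Matrix.mul_assoc, ← Matrix.mul_assoc T Tᴴ A, key]
    rw [e, h4]
end

section
/- If A is a T-EP matrix, then (A T*)† = T A† and (T* A T*)† = T A† T. -/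
open Matrix

theorem stmt8 {m n : ℕ} (A T : Matrix (Fin m) (Fin n) ℂ)
    (Ad : Matrix (Fin n) (Fin m) ℂ) (hT : T = T * Tᴴ * T) (hMP : IsMP A Ad)
    (hTEP : IsTEP T A) :
    IsMP (A * Tᴴ) (T * Ad) ∧ IsMP (Tᴴ * A * Tᴴ) (T * Ad * T) := by
  obtain ⟨h1, h2, h3, h4⟩ := hMP
  obtain ⟨hr, hA⟩ := hTEP
  -- key: T * Tᴴ * A = A
  have key : T * Tᴴ * A = A := by
    have hv : ∀ v : Fin n → ℂ, (T * Tᴴ * A).mulVec v = A.mulVec v := by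
      intro v
      have : A.mulVec v ∈ LinearMap.range (Matrix.mulVecLin (T * Aᴴ * T)) := by
        rw [← hr]; exact ⟨v, rfl⟩
      obtain ⟨w, hw⟩ := this
      have hw' : (T * Aᴴ * T).mulVec w = A.mulVec v := hw
      have : (T * Tᴴ * (T * Aᴴ * T)).mulVec w = (T * Aᴴ * T).mulVec w := by
        have : T * Tᴴ * (T * Aᴴ * T) = T * Aᴴ * T := by
          rw [show T * Tᴴ * (T * Aᴴ * T) = (T * Tᴴ * T) * Aᴴ * T by
            simp only [Matrix.mul_assoc], ← hT]
        rw [this]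
      calc (T * Tᴴ * A).mulVec v = (T * Tᴴ).mulVec (A.mulVec v) := by
            rw [← Matrix.mulVec_mulVec]
        _ = (T * Tᴴ).mulVec ((T * Aᴴ * T).mulVec w) := by rw [hw']
        _ = (T * Tᴴ * (T * Aᴴ * T)).mulVec w := by rw [Matrix.mulVec_mulVec]
        _ = (T * Aᴴ * T).mulVec w := this
        _ = A.mulVec v := hw'
    ext i j
    have := congrFun (hv (Pi.single j 1)) i
    simpa [Matrix.mulVec_single] using this
  constructor
  · refine ⟨?_, ?_, ?_, ?_⟩
    · calc A * Tᴴ * (T * Ad) * (A * Tᴴ)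
          = (A * Tᴴ * T) * Ad * A * Tᴴ := by simp only [Matrix.mul_assoc]
        _ = A * Ad * A * Tᴴ := by rw [← hA]
        _ = A * Tᴴ := by rw [h1]
    · calc T * Ad * (A * Tᴴ) * (T * Ad)
          = T * (Ad * (A * Tᴴ * T) * Ad) := by simp only [Matrix.mul_assoc]
        _ = T * (Ad * A * Ad) := by rw [← hA]
        _ = T * Ad := by rw [h2]
    · have : A * Tᴴ * (T * Ad) = A * Ad := by
        rw [show A * Tᴴ * (T * Ad) = (A * Tᴴ * T) * Ad by simp only [Matrix.mul_assoc], ← hA]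
      rw [this]; exact h3
    · have : T * Ad * (A * Tᴴ) = T * (Ad * A) * Tᴴ := by simp only [Matrix.mul_assoc]
      rw [this]
      calc (T * (Ad * A) * Tᴴ)ᴴ = T * (Ad * A)ᴴ * Tᴴ := by
            simp [Matrix.conjTranspose_mul, Matrix.mul_assoc]
        _ = T * (Ad * A) * Tᴴ := by rw [h4]
  · refine ⟨?_, ?_, ?_, ?_⟩
    · calc Tᴴ * A * Tᴴ * (T * Ad * T) * (Tᴴ * A * Tᴴ)
          = Tᴴ * ((A * Tᴴ * T) * Ad * (T * Tᴴ * A) * Tᴴ) := by simp only [Matrix.mul_assoc]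
        _ = Tᴴ * (A * Ad * A * Tᴴ) := by rw [← hA, key]
        _ = Tᴴ * A * Tᴴ := by rw [h1]; simp only [Matrix.mul_assoc]
    · calc T * Ad * T * (Tᴴ * A * Tᴴ) * (T * Ad * T)
          = T * (Ad * ((T * Tᴴ * A) * Tᴴ * T) * Ad) * T := by simp only [Matrix.mul_assoc]
        _ = T * (Ad * (A * Tᴴ * T) * Ad) * T := by rw [key]
        _ = T * (Ad * A * Ad) * T := by rw [← hA]
        _ = T * Ad * T := by rw [h2]
    · have e : Tᴴ * A * Tᴴ * (T * Ad * T) = Tᴴ * (A * Ad) * T := by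
        calc Tᴴ * A * Tᴴ * (T * Ad * T) = Tᴴ * ((A * Tᴴ * T) * Ad * T) := by
              simp only [Matrix.mul_assoc]
          _ = Tᴴ * (A * Ad) * T := by rw [← hA]; simp only [Matrix.mul_assoc]
      rw [e]
      calc (Tᴴ * (A * Ad) * T)ᴴ = Tᴴ * (A * Ad)ᴴ * T := by
            simp [Matrix.conjTranspose_mul, Matrix.mul_assoc]
        _ = Tᴴ * (A * Ad) * T := by rw [h3]
    · have e : T * Ad * T * (Tᴴ * A * Tᴴ) = T * (Ad * A) * Tᴴ := by
        calc T * Ad * T * (Tᴴ * A * Tᴴ) = T * (Ad * (T * Tᴴ * A) * Tᴴ) := by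
              simp only [Matrix.mul_assoc]
          _ = T * (Ad * A) * Tᴴ := by rw [key]; simp only [Matrix.mul_assoc]
      rw [e]
      calc (T * (Ad * A) * Tᴴ)ᴴ = T * (Ad * A)ᴴ * Tᴴ := by
            simp [Matrix.conjTranspose_mul, Matrix.mul_assoc]
        _ = T * (Ad * A) * Tᴴ := by rw [h4]
end

section
/- An m×n complex matrix A is T-EP if and only if there exists an m×m EP matrix E such that A = E T and T T* E = E. -/
open Matrix

lemma range_mul_le' {a b c : ℕ} (M : Matrix (Fin a) (Fin b) ℂ) (N : Matrix (Fin b) (Fin c) ℂ) :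
    LinearMap.range (mulVecLin (M * N)) ≤ LinearMap.range (mulVecLin M) := by
  rw [Matrix.mulVecLin_mul]; exact LinearMap.range_comp_le_range _ _

lemma fix_of_range_le' {a b : ℕ} (P : Matrix (Fin a) (Fin a) ℂ) (M : Matrix (Fin a) (Fin b) ℂ)
    (hP : P * P = P)
    (h : LinearMap.range (mulVecLin M) ≤ LinearMap.range (mulVecLin P)) : P * M = M := by
  have key : ∀ x : Fin b → ℂ, (P * M) *ᵥ x = M *ᵥ x := by
    intro x
    obtain ⟨y, hy⟩ := h ⟨x, rfl⟩
    simp only [mulVecLin_apply] at hy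
    rw [← Matrix.mulVec_mulVec, ← hy, Matrix.mulVec_mulVec, hP, hy]
  ext i j
  have := congrFun (key (Pi.single j 1)) i
  simpa [Matrix.mulVec_single] using this

theorem stmt9 {m n : ℕ} (A T : Matrix (Fin m) (Fin n) ℂ)
    (hT : T = T * Tᴴ * T) :
    IsTEP T A ↔
      ∃ E : Matrix (Fin m) (Fin m) ℂ,
        LinearMap.range (Matrix.mulVecLin E) = LinearMap.range (Matrix.mulVecLin Eᴴ) ∧
        A = E * T ∧ T * Tᴴ * E = E := by
  have hPidem : (T * Tᴴ) * (T * Tᴴ) = T * Tᴴ := by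
    rw [show (T * Tᴴ) * (T * Tᴴ) = (T * Tᴴ * T) * Tᴴ by
      simp only [Matrix.mul_assoc], ← hT]
  constructor
  · rintro ⟨h1, h2⟩
    -- T Tᴴ A = A
    have hfac0 : T * Aᴴ * T = (T * Tᴴ) * (T * Aᴴ * T) := by
      rw [show (T * Tᴴ) * (T * Aᴴ * T) = ((T * Tᴴ) * T) * (Aᴴ * T) by
        simp only [Matrix.mul_assoc], ← hT, Matrix.mul_assoc]
    have hPA : (T * Tᴴ) * A = A := by
      apply fix_of_range_le' (T * Tᴴ) A hPidem
      rw [h1]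
      nth_rewrite 1 [hfac0]
      exact range_mul_le' (T * Tᴴ) (T * Aᴴ * T)
    have hAP : Aᴴ * (T * Tᴴ) = Aᴴ := by
      have := congrArg Matrix.conjTranspose hPA
      simpa [Matrix.conjTranspose_mul, Matrix.mul_assoc] using this
    refine ⟨A * Tᴴ, ?_, h2, ?_⟩
    · have hEH : (A * Tᴴ)ᴴ = T * Aᴴ := by
        simp [Matrix.conjTranspose_mul]
      rw [hEH]
      have r1 : LinearMap.range (mulVecLin (A * Tᴴ)) ≤ LinearMap.range (mulVecLin A) :=
        range_mul_le' A Tᴴ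
      have r2 : LinearMap.range (mulVecLin A) ≤ LinearMap.range (mulVecLin (A * Tᴴ)) := by
        nth_rewrite 1 [h2]
        exact range_mul_le' (A * Tᴴ) T
      have r3 : LinearMap.range (mulVecLin A) ≤ LinearMap.range (mulVecLin (T * Aᴴ)) := by
        rw [h1]; exact range_mul_le' (T * Aᴴ) T
      have hfac : T * Aᴴ = (T * Aᴴ * T) * Tᴴ := by
        rw [Matrix.mul_assoc (T * Aᴴ) T Tᴴ, Matrix.mul_assoc T Aᴴ (T * Tᴴ), hAP]
      have r4 : LinearMap.range (mulVecLin (T * Aᴴ)) ≤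
          LinearMap.range (mulVecLin (T * Aᴴ * T)) := by
        nth_rewrite 1 [hfac]
        exact range_mul_le' (T * Aᴴ * T) Tᴴ
      exact le_antisymm (r1.trans r3) ((r4.trans h1.ge).trans r2)
    · rw [← Matrix.mul_assoc, hPA]
  · rintro ⟨E, hE, hA, hPE⟩
    have hEP : E * (T * Tᴴ) = E := by
      have h1 : LinearMap.range (mulVecLin Eᴴ) ≤ LinearMap.range (mulVecLin (T * Tᴴ)) := by
        rw [← hE]
        nth_rewrite 1 [← hPE]
        exact range_mul_le' (T * Tᴴ) E
      have h2 := fix_of_range_le' (T * Tᴴ) Eᴴ hPidem h1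
      have := congrArg Matrix.conjTranspose h2
      simpa [Matrix.conjTranspose_mul, Matrix.mul_assoc] using this
    have hPEH : (T * Tᴴ) * Eᴴ = Eᴴ := by
      have := congrArg Matrix.conjTranspose hEP
      simpa [Matrix.conjTranspose_mul, Matrix.mul_assoc] using this
    have hEHP : Eᴴ * (T * Tᴴ) = Eᴴ := by
      have := congrArg Matrix.conjTranspose hPE
      simpa [Matrix.conjTranspose_mul, Matrix.mul_assoc] using this
    constructor
    · have hAH : Aᴴ = Tᴴ * Eᴴ := by
        rw [hA]; simp [Matrix.conjTranspose_mul]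
      have hTAT : T * Aᴴ * T = Eᴴ * T := by
        rw [hAH, show T * (Tᴴ * Eᴴ) = (T * Tᴴ) * Eᴴ by rw [Matrix.mul_assoc], hPEH]
      rw [hTAT, hA]
      have e1 : LinearMap.range (mulVecLin (E * T)) = LinearMap.range (mulVecLin E) := by
        refine le_antisymm (range_mul_le' E T) ?_
        nth_rewrite 1 [← hEP]
        rw [← Matrix.mul_assoc]
        exact range_mul_le' (E * T) Tᴴ
      have e2 : LinearMap.range (mulVecLin (Eᴴ * T)) = LinearMap.range (mulVecLin Eᴴ) := by
        refine le_antisymm (range_mul_le' Eᴴ T) ?_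
        nth_rewrite 1 [← hEHP]
        rw [← Matrix.mul_assoc]
        exact range_mul_le' (Eᴴ * T) Tᴴ
      rw [e1, e2, hE]
    · rw [hA, Matrix.mul_assoc (E * T), Matrix.mul_assoc E T, ← Matrix.mul_assoc T, ← hT]
end

section
/- If A is T-EP, with E an EP matrix satisfying A = E T and T T* E = E, then the Moore-Penrose inverse of A is A† = T* E†. -/
open Matrix

theorem stmt10 {m n : ℕ} (A T : Matrix (Fin m) (Fin n) ℂ)
    (E : Matrix (Fin m) (Fin m) ℂ) (Ed : Matrix (Fin m) (Fin m) ℂ)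
    (hT : T = T * Tᴴ * T) (hTEP : IsTEP T A)
    (hE : LinearMap.range (Matrix.mulVecLin E) = LinearMap.range (Matrix.mulVecLin Eᴴ))
    (hA : A = E * T) (hTE : T * Tᴴ * E = E) (hEd : IsMP E Ed) :
    IsMP A (Tᴴ * Ed) := by
  obtain ⟨h1, h2, h3, h4⟩ := hEd
  -- E * Ed * Eᴴ = Eᴴ
  have hproj : E * Ed * Eᴴ = Eᴴ := by
    have hcol : ∀ v : Fin m → ℂ, (E * Ed * Eᴴ).mulVec v = Eᴴ.mulVec v := by
      intro v
      have hv : Eᴴ.mulVec v ∈ LinearMap.range (Matrix.mulVecLin E) := by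
        rw [hE]; exact ⟨v, rfl⟩
      obtain ⟨u, hu⟩ := hv
      have hu' : E.mulVec u = Eᴴ.mulVec v := hu
      calc (E * Ed * Eᴴ).mulVec v = (E * Ed).mulVec (Eᴴ.mulVec v) := by
            rw [← Matrix.mulVec_mulVec]
        _ = (E * Ed).mulVec (E.mulVec u) := by rw [hu']
        _ = (E * Ed * E).mulVec u := by rw [Matrix.mulVec_mulVec]
        _ = E.mulVec u := by rw [h1]
        _ = Eᴴ.mulVec v := hu'
    apply Matrix.ext
    intro i j
    have := congrFun (hcol (Pi.single j 1)) i
    simpa [Matrix.mulVec_single] using this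
  have hTTEH : T * Tᴴ * Eᴴ = Eᴴ := by
    calc T * Tᴴ * Eᴴ = T * Tᴴ * (E * Ed * Eᴴ) := by rw [hproj]
      _ = (T * Tᴴ * E) * (Ed * Eᴴ) := by simp only [Matrix.mul_assoc]
      _ = E * (Ed * Eᴴ) := by rw [hTE]
      _ = Eᴴ := by rw [← mul_assoc, hproj]
  have hEdE : Ed * E = Eᴴ * Edᴴ := by
    conv_lhs => rw [← h4]
    rw [Matrix.conjTranspose_mul]
  have hEdrep : Ed = Eᴴ * Edᴴ * Ed := by
    conv_lhs => rw [← h2]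
    rw [hEdE]
  have hTTEd : T * Tᴴ * Ed = Ed := by
    calc T * Tᴴ * Ed = T * Tᴴ * (Eᴴ * Edᴴ * Ed) := by rw [← hEdrep]
      _ = (T * Tᴴ * Eᴴ) * (Edᴴ * Ed) := by simp only [Matrix.mul_assoc]
      _ = Eᴴ * (Edᴴ * Ed) := by rw [hTTEH]
      _ = Ed := by rw [← mul_assoc, ← hEdrep]
  refine ⟨?_, ?_, ?_, ?_⟩
  · calc A * (Tᴴ * Ed) * A = E * (T * Tᴴ * Ed) * (E * T) := by rw [hA]; simp only [Matrix.mul_assoc]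
      _ = E * Ed * E * T := by rw [hTTEd]; simp only [Matrix.mul_assoc]
      _ = A := by rw [h1, hA]
  · calc Tᴴ * Ed * A * (Tᴴ * Ed) = Tᴴ * (Ed * E * (T * Tᴴ * Ed)) := by rw [hA]; simp only [Matrix.mul_assoc]
      _ = Tᴴ * (Ed * E * Ed) := by rw [hTTEd]
      _ = Tᴴ * Ed := by rw [h2]
  · have : A * (Tᴴ * Ed) = E * Ed := by
      rw [hA]
      calc E * T * (Tᴴ * Ed) = E * (T * Tᴴ * Ed) := by simp only [Matrix.mul_assoc]
        _ = E * Ed := by rw [hTTEd]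
    rw [this, h3]
  · have : Tᴴ * Ed * A = Tᴴ * (Ed * E) * T := by rw [hA]; simp only [Matrix.mul_assoc]
    rw [this]
    have h5 : (Tᴴ * (Ed * E) * T)ᴴ = Tᴴ * (Ed * E)ᴴ * T := by
      rw [Matrix.conjTranspose_mul, Matrix.conjTranspose_mul,
        Matrix.conjTranspose_conjTranspose, Matrix.mul_assoc]
    rw [h5, h4]
end

section
/- An m×n complex matrix A is T-EP if and only if T A† A = A A† T and A = A T* T. -/
open Matrix


/-- A Hermitian idempotent complex matrix with zero trace is zero. -/
lemma proj_eq_zero' {k : ℕ} (M : Matrix (Fin k) (Fin k) ℂ) (hH : Mᴴ = M)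
    (hI : M * M = M) (htr : M.trace = 0) : M = 0 := by
  have h0 : (Mᴴ * M).trace = 0 := by rw [hH, hI, htr]
  have h1 : (∑ i, ∑ j, Complex.normSq (M j i)) = 0 := by
    have : ((∑ i, ∑ j, Complex.normSq (M j i) : ℝ) : ℂ) = 0 := by
      rw [← h0, Matrix.trace]
      push_cast
      refine Finset.sum_congr rfl fun i _ => ?_
      simp only [Matrix.diag_apply, Matrix.mul_apply, Matrix.conjTranspose_apply]
      refine Finset.sum_congr rfl fun j _ => ?_
      rw [Complex.normSq_eq_conj_mul_self]
      rfl
    exact_mod_cast this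
  ext i j
  have hnn : ∀ i ∈ Finset.univ, (0:ℝ) ≤ ∑ j, Complex.normSq (M j i) :=
    fun i _ => Finset.sum_nonneg fun j _ => Complex.normSq_nonneg _
  have h2 := (Finset.sum_eq_zero_iff_of_nonneg hnn).mp h1 j (Finset.mem_univ j)
  have h3 := (Finset.sum_eq_zero_iff_of_nonneg
    (fun l _ => Complex.normSq_nonneg (M l j))).mp h2 i (Finset.mem_univ i)
  simpa using Complex.normSq_eq_zero.mp h3

lemma proj_unique' {k : ℕ} (P E : Matrix (Fin k) (Fin k) ℂ) (hP : P * P = P)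
    (hPH : Pᴴ = P) (hE : E * E = E) (hEH : Eᴴ = E) (hPE : P * E = E)
    (htr : P.trace = E.trace) : P = E := by
  have hEP : E * P = E := by
    have : (P * E)ᴴ = Eᴴ * Pᴴ := conjTranspose_mul P E
    rw [hPE, hEH, hPH] at this
    exact this.symm
  have h0 : P - E = 0 :=
    proj_eq_zero' _ (by rw [conjTranspose_sub, hPH, hEH])
      (by rw [sub_mul, mul_sub, mul_sub, hP, hE, hPE, hEP]; abel)
      (by rw [trace_sub, htr, sub_self])
  exact sub_eq_zero.mp h0

lemma range_mul_le'_s11 {m n k : ℕ} (A : Matrix (Fin m) (Fin n) ℂ)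
    (B : Matrix (Fin n) (Fin k) ℂ) :
    LinearMap.range (Matrix.mulVecLin (A * B)) ≤ LinearMap.range (Matrix.mulVecLin A) := by
  rw [Matrix.mulVecLin_mul]
  exact LinearMap.range_comp_le_range _ _

lemma proj_of_range_le' {m n k : ℕ} (A : Matrix (Fin m) (Fin n) ℂ)
    (Ad : Matrix (Fin n) (Fin m) ℂ) (m1 : A * Ad * A = A)
    (M : Matrix (Fin m) (Fin k) ℂ)
    (h : LinearMap.range (Matrix.mulVecLin M) ≤ LinearMap.range (Matrix.mulVecLin A)) :
    A * Ad * M = M := by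
  ext i j
  have hmem : M *ᵥ Pi.single j 1 ∈ LinearMap.range (Matrix.mulVecLin M) :=
    ⟨Pi.single j 1, rfl⟩
  obtain ⟨u, hu⟩ := h hmem
  have hu' : A *ᵥ u = M *ᵥ Pi.single j 1 := hu
  have key : (A * Ad * M) *ᵥ Pi.single j 1 = M *ᵥ Pi.single j 1 := by
    calc (A * Ad * M) *ᵥ Pi.single j 1 = (A * Ad) *ᵥ (M *ᵥ Pi.single j 1) := by
          rw [mulVec_mulVec]
      _ = (A * Ad) *ᵥ (A *ᵥ u) := by rw [hu']
      _ = (A * Ad * A) *ᵥ u := by rw [mulVec_mulVec]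
      _ = M *ᵥ Pi.single j 1 := by rw [m1, hu']
  have := congrFun key i
  simpa using this

lemma exists_factor_of_range_le' {m n k : ℕ} (N : Matrix (Fin m) (Fin k) ℂ)
    (A : Matrix (Fin m) (Fin n) ℂ)
    (h : LinearMap.range (Matrix.mulVecLin A) ≤ LinearMap.range (Matrix.mulVecLin N)) :
    ∃ X : Matrix (Fin k) (Fin n) ℂ, A = N * X := by
  have hc : ∀ j : Fin n, ∃ x : Fin k → ℂ, N *ᵥ x = A *ᵥ Pi.single j 1 :=
    fun j => h ⟨Pi.single j 1, rfl⟩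
  choose f hf using hc
  refine ⟨Matrix.of fun i j => f j i, ?_⟩
  ext i j
  have := congrFun (hf j) i
  simp only [mulVec_single, MulOpposite.op_one, one_smul, Matrix.col_apply] at this
  rw [Matrix.mul_apply, ← this]
  simp [Matrix.mulVec, dotProduct]

/-- If `A Ad` absorbs `E := T (Ad A) Tᴴ` on the left, then `A Ad = E`
(trace/projection argument). -/
lemma P_eq_E' {m n : ℕ} (A T : Matrix (Fin m) (Fin n) ℂ) (Ad : Matrix (Fin n) (Fin m) ℂ)
    (m1 : A * Ad * A = A) (m2 : Ad * A * Ad = Ad)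
    (m3 : (A * Ad)ᴴ = A * Ad) (m4 : (Ad * A)ᴴ = Ad * A)
    (h2 : A = A * Tᴴ * T)
    (hstar : A * Ad * (T * (Ad * (A * Tᴴ))) = T * (Ad * (A * Tᴴ))) :
    A * Ad = T * (Ad * (A * Tᴴ)) := by
  have h2' : A * (Tᴴ * T) = A := by rw [← Matrix.mul_assoc, ← h2]
  have hAH : Tᴴ * (T * Aᴴ) = Aᴴ := by
    conv_rhs => rw [h2]
    simp only [conjTranspose_mul, conjTranspose_conjTranspose, Matrix.mul_assoc]
  have hF6 : Aᴴ * Adᴴ = Ad * A := by rw [← conjTranspose_mul, m4]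
  have e1 : Ad = Aᴴ * (Adᴴ * Ad) := by
    calc Ad = Ad * A * Ad := m2.symm
      _ = (Ad * A)ᴴ * Ad := by rw [m4]
      _ = Aᴴ * Adᴴ * Ad := by rw [conjTranspose_mul]
      _ = Aᴴ * (Adᴴ * Ad) := by rw [Matrix.mul_assoc]
  have hTTAd : Tᴴ * (T * Ad) = Ad := by
    calc Tᴴ * (T * Ad) = Tᴴ * (T * (Aᴴ * (Adᴴ * Ad))) := by rw [← e1]
      _ = Tᴴ * (T * Aᴴ) * (Adᴴ * Ad) := by simp only [Matrix.mul_assoc]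
      _ = Aᴴ * (Adᴴ * Ad) := by rw [hAH]
      _ = Ad := e1.symm
  have hTTAdB : ∀ {k : ℕ} (B : Matrix (Fin m) (Fin k) ℂ),
      Tᴴ * (T * (Ad * B)) = Ad * B := fun B => by
    calc Tᴴ * (T * (Ad * B)) = Tᴴ * (T * Ad) * B := by simp only [Matrix.mul_assoc]
      _ = Ad * B := by rw [hTTAd]
  have hm2B : ∀ {k : ℕ} (B : Matrix (Fin m) (Fin k) ℂ),
      Ad * (A * (Ad * B)) = Ad * B := fun B => by
    calc Ad * (A * (Ad * B)) = Ad * A * Ad * B := by simp only [Matrix.mul_assoc]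
      _ = Ad * B := by rw [m2]
  have hEE : T * (Ad * (A * Tᴴ)) * (T * (Ad * (A * Tᴴ))) = T * (Ad * (A * Tᴴ)) := by
    calc T * (Ad * (A * Tᴴ)) * (T * (Ad * (A * Tᴴ)))
        = T * (Ad * (A * (Tᴴ * (T * (Ad * (A * Tᴴ)))))) := by simp only [Matrix.mul_assoc]
      _ = T * (Ad * (A * (Ad * (A * Tᴴ)))) := by rw [hTTAdB]
      _ = T * (Ad * (A * Tᴴ)) := by rw [hm2B]
  have hF6B : ∀ {k : ℕ} (B : Matrix (Fin n) (Fin k) ℂ),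
      Aᴴ * (Adᴴ * B) = Ad * (A * B) := fun B => by
    calc Aᴴ * (Adᴴ * B) = Aᴴ * Adᴴ * B := by simp only [Matrix.mul_assoc]
      _ = Ad * A * B := by rw [hF6]
      _ = Ad * (A * B) := by simp only [Matrix.mul_assoc]
  have hEH : (T * (Ad * (A * Tᴴ)))ᴴ = T * (Ad * (A * Tᴴ)) := by
    simp only [conjTranspose_mul, conjTranspose_conjTranspose, Matrix.mul_assoc, hF6B]
  have hPP : A * Ad * (A * Ad) = A * Ad := by
    calc A * Ad * (A * Ad) = A * Ad * A * Ad := by simp only [Matrix.mul_assoc]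
      _ = A * Ad := by rw [m1]
  have htr : (A * Ad).trace = (T * (Ad * (A * Tᴴ))).trace := by
    calc (A * Ad).trace = (Ad * A).trace := trace_mul_comm A Ad
      _ = (Ad * (A * (Tᴴ * T))).trace := by rw [h2']
      _ = (Ad * (A * Tᴴ) * T).trace := by simp only [Matrix.mul_assoc]
      _ = (T * (Ad * (A * Tᴴ))).trace := trace_mul_comm _ _
  exact proj_unique' (A * Ad) (T * (Ad * (A * Tᴴ))) hPP m3 hEE hEH hstar htr

theorem stmt11 {m n : ℕ} (A T : Matrix (Fin m) (Fin n) ℂ)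
    (Ad : Matrix (Fin n) (Fin m) ℂ) (hT : T = T * Tᴴ * T) (hMP : IsMP A Ad) :
    IsTEP T A ↔ (T * Ad * A = A * Ad * T ∧ A = A * Tᴴ * T) := by
  obtain ⟨m1, m2, m3, m4⟩ := hMP
  have hF7 : Adᴴ * Aᴴ = A * Ad := by rw [← conjTranspose_mul, m3]
  have hF7B : ∀ {k : ℕ} (B : Matrix (Fin m) (Fin k) ℂ),
      Adᴴ * (Aᴴ * B) = A * (Ad * B) := fun B => by
    calc Adᴴ * (Aᴴ * B) = Adᴴ * Aᴴ * B := by simp only [Matrix.mul_assoc]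
      _ = A * Ad * B := by rw [hF7]
      _ = A * (Ad * B) := by simp only [Matrix.mul_assoc]
  have hF6 : Aᴴ * Adᴴ = Ad * A := by rw [← conjTranspose_mul, m4]
  have hF6B : ∀ {k : ℕ} (B : Matrix (Fin n) (Fin k) ℂ),
      Aᴴ * (Adᴴ * B) = Ad * (A * B) := fun B => by
    calc Aᴴ * (Adᴴ * B) = Aᴴ * Adᴴ * B := by simp only [Matrix.mul_assoc]
      _ = Ad * A * B := by rw [hF6]
      _ = Ad * (A * B) := by simp only [Matrix.mul_assoc]
  have hm1B : ∀ {k : ℕ} (B : Matrix (Fin n) (Fin k) ℂ),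
      A * (Ad * (A * B)) = A * B := fun B => by
    calc A * (Ad * (A * B)) = A * Ad * A * B := by simp only [Matrix.mul_assoc]
      _ = A * B := by rw [m1]
  have hm2B : ∀ {k : ℕ} (B : Matrix (Fin m) (Fin k) ℂ),
      Ad * (A * (Ad * B)) = Ad * B := fun B => by
    calc Ad * (A * (Ad * B)) = Ad * A * Ad * B := by simp only [Matrix.mul_assoc]
      _ = Ad * B := by rw [m2]
  have hTB : ∀ {k : ℕ} (B : Matrix (Fin n) (Fin k) ℂ),
      T * (Tᴴ * (T * B)) = T * B := fun B => by
    calc T * (Tᴴ * (T * B)) = T * Tᴴ * T * B := by simp only [Matrix.mul_assoc]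
      _ = T * B := by rw [← hT]
  have hF5 : Ad * A * Aᴴ = Aᴴ := by
    calc Ad * A * Aᴴ = (Ad * A)ᴴ * Aᴴ := by rw [m4]
      _ = (A * (Ad * A))ᴴ := by rw [← conjTranspose_mul]
      _ = (A * Ad * A)ᴴ := by rw [Matrix.mul_assoc]
      _ = Aᴴ := by rw [m1]
  have hF5B : ∀ {k : ℕ} (B : Matrix (Fin m) (Fin k) ℂ),
      Ad * (A * (Aᴴ * B)) = Aᴴ * B := fun B => by
    calc Ad * (A * (Aᴴ * B)) = Ad * A * Aᴴ * B := by simp only [Matrix.mul_assoc]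
      _ = Aᴴ * B := by rw [hF5]
  constructor
  · rintro ⟨hr, h2⟩
    refine ⟨?_, h2⟩
    have h2' : A * (Tᴴ * T) = A := by rw [← Matrix.mul_assoc, ← h2]
    have hi : A * Ad * (T * Aᴴ * T) = T * Aᴴ * T :=
      proj_of_range_le' A Ad m1 _ hr.ge
    obtain ⟨X, hX⟩ := exists_factor_of_range_le' (T * Aᴴ * T) A hr.le
    have hSA : T * Tᴴ * A = A := by
      have key : T * Tᴴ * (T * Aᴴ * T * X) = T * Aᴴ * T * X := by
        calc T * Tᴴ * (T * Aᴴ * T * X) = T * Tᴴ * T * (Aᴴ * (T * X)) := by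
              simp only [Matrix.mul_assoc]
          _ = T * (Aᴴ * (T * X)) := by rw [← hT]
          _ = T * Aᴴ * T * X := by simp only [Matrix.mul_assoc]
      rw [hX]; exact key
    have hSAB : ∀ {k : ℕ} (B : Matrix (Fin n) (Fin k) ℂ),
        T * (Tᴴ * (A * B)) = A * B := fun B => by
      calc T * (Tᴴ * (A * B)) = T * Tᴴ * A * B := by simp only [Matrix.mul_assoc]
        _ = A * B := by rw [hSA]
    have e := congrArg conjTranspose hi
    simp only [conjTranspose_mul, conjTranspose_conjTranspose, Matrix.mul_assoc,
      hF7, hF7B] at e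
    -- e : Tᴴ * (A * (Tᴴ * (A * Ad))) = Tᴴ * (A * Tᴴ)
    have e2 := congrArg (fun M => T * M) e
    rw [hSAB, hSAB] at e2
    -- e2 : A * (Tᴴ * (A * Ad)) = A * Tᴴ
    have e3 := congrArg conjTranspose e2
    simp only [conjTranspose_mul, conjTranspose_conjTranspose, Matrix.mul_assoc,
      hF7, hF7B] at e3
    -- e3 : A * (Ad * (T * Aᴴ)) = T * Aᴴ
    have e3B : ∀ {k : ℕ} (B : Matrix (Fin m) (Fin k) ℂ),
        A * (Ad * (T * (Aᴴ * B))) = T * (Aᴴ * B) := fun B => by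
      calc A * (Ad * (T * (Aᴴ * B))) = A * (Ad * (T * Aᴴ)) * B := by
            simp only [Matrix.mul_assoc]
        _ = T * Aᴴ * B := by rw [e3]
        _ = T * (Aᴴ * B) := by simp only [Matrix.mul_assoc]
    have hstar : A * Ad * (T * (Ad * (A * Tᴴ))) = T * (Ad * (A * Tᴴ)) := by
      simp only [Matrix.mul_assoc]
      rw [← hF6B]
      exact e3B _
    have hPE := P_eq_E' A T Ad m1 m2 m3 m4 h2 hstar
    calc T * Ad * A = T * (Ad * A) := by simp only [Matrix.mul_assoc]
      _ = T * (Ad * (A * (Tᴴ * T))) := by rw [h2']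
      _ = T * (Ad * (A * Tᴴ)) * T := by simp only [Matrix.mul_assoc]
      _ = A * Ad * T := by rw [← hPE]
  · rintro ⟨h1, h2⟩
    refine ⟨?_, h2⟩
    have h1B : ∀ {k : ℕ} (B : Matrix (Fin n) (Fin k) ℂ),
        T * (Ad * (A * B)) = A * (Ad * (T * B)) := fun B => by
      calc T * (Ad * (A * B)) = T * Ad * A * B := by simp only [Matrix.mul_assoc]
        _ = A * Ad * T * B := by rw [h1]
        _ = A * (Ad * (T * B)) := by simp only [Matrix.mul_assoc]
    have hstar : A * Ad * (T * (Ad * (A * Tᴴ))) = T * (Ad * (A * Tᴴ)) := by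
      calc A * Ad * (T * (Ad * (A * Tᴴ))) = A * (Ad * (T * (Ad * (A * Tᴴ)))) := by
            simp only [Matrix.mul_assoc]
        _ = T * (Ad * (A * (Ad * (A * Tᴴ)))) := by rw [← h1B]
        _ = T * (Ad * (A * Tᴴ)) := by rw [hm2B]
    have hPE := P_eq_E' A T Ad m1 m2 m3 m4 h2 hstar
    have hPEB : ∀ {k : ℕ} (B : Matrix (Fin m) (Fin k) ℂ),
        A * (Ad * B) = T * (Ad * (A * (Tᴴ * B))) := fun B => by
      calc A * (Ad * B) = A * Ad * B := by simp only [Matrix.mul_assoc]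
        _ = T * (Ad * (A * Tᴴ)) * B := by rw [hPE]
        _ = T * (Ad * (A * (Tᴴ * B))) := by simp only [Matrix.mul_assoc]
    -- range N ≤ range A
    have hNY : T * Aᴴ * T = A * (Ad * (T * (Aᴴ * T))) := by
      rw [← h1B, hF5B]; simp only [Matrix.mul_assoc]
    have le1 : LinearMap.range (Matrix.mulVecLin (T * Aᴴ * T)) ≤
        LinearMap.range (Matrix.mulVecLin A) := by
      conv_lhs => rw [hNY]
      exact range_mul_le'_s11 _ _
    -- range A ≤ range N
    have hAdH : A * Ad * Adᴴ = Adᴴ := by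
      conv_rhs => rw [← m2]
      rw [Matrix.mul_assoc Ad A Ad, conjTranspose_mul, m3]
    have hTTAdH : T * (Tᴴ * Adᴴ) = Adᴴ := by
      conv_lhs => rw [← hAdH]
      conv_rhs => rw [← hAdH]
      rw [hPE]
      calc T * (Tᴴ * (T * (Ad * (A * Tᴴ)) * Adᴴ)) = T * (Tᴴ * (T * (Ad * (A * (Tᴴ * Adᴴ))))) := by
            simp only [Matrix.mul_assoc]
        _ = T * (Ad * (A * (Tᴴ * Adᴴ))) := by rw [hTB]
        _ = T * (Ad * (A * Tᴴ)) * Adᴴ := by simp only [Matrix.mul_assoc]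
    have hTTAdHB : ∀ {k : ℕ} (B : Matrix (Fin n) (Fin k) ℂ),
        T * (Tᴴ * (Adᴴ * B)) = Adᴴ * B := fun B => by
      calc T * (Tᴴ * (Adᴴ * B)) = T * (Tᴴ * Adᴴ) * B := by simp only [Matrix.mul_assoc]
        _ = Adᴴ * B := by rw [hTTAdH]
    have hAX : T * Aᴴ * T * (Tᴴ * (Adᴴ * (Tᴴ * A))) = A := by
      calc T * Aᴴ * T * (Tᴴ * (Adᴴ * (Tᴴ * A)))
          = T * (Aᴴ * (T * (Tᴴ * (Adᴴ * (Tᴴ * A))))) := by simp only [Matrix.mul_assoc]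
        _ = T * (Aᴴ * (Adᴴ * (Tᴴ * A))) := by rw [hTTAdHB]
        _ = T * (Ad * (A * (Tᴴ * A))) := by rw [hF6B]
        _ = A * (Ad * A) := by rw [← hPEB]
        _ = A := by rw [← Matrix.mul_assoc, m1]
    have le2 : LinearMap.range (Matrix.mulVecLin A) ≤
        LinearMap.range (Matrix.mulVecLin (T * Aᴴ * T)) := by
      conv_lhs => rw [← hAX]
      exact range_mul_le'_s11 _ _
    exact le_antisymm le2 le1
end

section
/- A is T-EP if and only if A* is T*-EP, if and only if A† is T*-EP. -/
open Matrix

section Aux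

variable {k l p q : ℕ}

local notation "R" X => LinearMap.range (Matrix.mulVecLin X)

lemma Rmap (X : Matrix (Fin k) (Fin l) ℂ) (Y : Matrix (Fin l) (Fin p) ℂ) :
    (R (X * Y)) = (R Y).map X.mulVecLin := by
  rw [Matrix.mulVecLin_mul, LinearMap.range_comp]

lemma Rfactor {X : Matrix (Fin k) (Fin p) ℂ} {Y : Matrix (Fin k) (Fin l) ℂ}
    {Z : Matrix (Fin l) (Fin p) ℂ} (h : X = Y * Z) : (R X) ≤ R Y := by
  rw [h, Rmap]
  exact LinearMap.map_le_range

lemma proj_fix {P : Matrix (Fin k) (Fin k) ℂ} {M : Matrix (Fin k) (Fin l) ℂ}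
    (hP : P * P = P) (h : (R M) ≤ R P) : P * M = M := by
  have key : ∀ v, (P * M) *ᵥ v = M *ᵥ v := by
    intro v
    obtain ⟨w, hw⟩ := h ⟨v, rfl⟩
    simp only [mulVecLin_apply] at hw
    rw [← mulVec_mulVec, ← hw, mulVec_mulVec, hP]
  ext i j
  have := congr_fun (key (Pi.single j 1)) i
  simpa [mulVec_single_one] using this

end Aux

section Main

variable {m n : ℕ}

local notation "R" X => LinearMap.range (Matrix.mulVecLin X)

lemma main1 {T A : Matrix (Fin m) (Fin n) ℂ} (hT : T = T * Tᴴ * T)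
    (h : IsTEP T A) : IsTEP Tᴴ Aᴴ := by
  obtain ⟨ha, hb⟩ := h
  have hQ : (T * Tᴴ) * (T * Tᴴ) = T * Tᴴ := by
    rw [← Matrix.mul_assoc, ← hT]
  have hRTQ : (R T) ≤ R (T * Tᴴ) :=
    Rfactor (show T = (T * Tᴴ) * T by rw [Matrix.mul_assoc, ← Matrix.mul_assoc, ← hT])
  have hRA : (R A) ≤ R (T * Tᴴ) := by
    rw [ha]
    exact le_trans (Rfactor (show T * Aᴴ * T = T * (Aᴴ * T) by rw [Matrix.mul_assoc])) hRTQ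
  have hQA : (T * Tᴴ) * A = A := proj_fix hQ hRA
  have hb' : Aᴴ = Aᴴ * T * Tᴴ := by
    conv_lhs => rw [← hQA]
    simp [Matrix.conjTranspose_mul, Matrix.mul_assoc]
  have hPA : Tᴴ * T * Aᴴ = Aᴴ := by
    conv_rhs => rw [hb]
    simp [Matrix.conjTranspose_mul, Matrix.mul_assoc]
  constructor
  · rw [conjTranspose_conjTranspose]
    apply le_antisymm
    · -- R Aᴴ ≤ R (Tᴴ * A * Tᴴ)
      have step1 : (R (T * Aᴴ)) ≤ R A := by
        rw [ha]
        refine Rfactor (show T * Aᴴ = T * Aᴴ * T * Tᴴ from ?_)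
        conv_rhs => rw [Matrix.mul_assoc, Matrix.mul_assoc, ← Matrix.mul_assoc Aᴴ T Tᴴ, ← hb']
      have step2 : (R Aᴴ) ≤ R (Tᴴ * A) := by
        have h0 : Aᴴ = Tᴴ * (T * Aᴴ) := by rw [← Matrix.mul_assoc, hPA]
        calc (R Aᴴ) = (R (T * Aᴴ)).map Tᴴ.mulVecLin := by rw [← Rmap, ← h0]
          _ ≤ (R A).map Tᴴ.mulVecLin := Submodule.map_mono step1
          _ = R (Tᴴ * A) := (Rmap _ _).symm
      have step3 : (R (Tᴴ * A)) ≤ R (Tᴴ * A * Tᴴ) := by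
        refine Rfactor (show Tᴴ * A = Tᴴ * A * Tᴴ * T from ?_)
        conv_lhs => rw [hb]
        simp only [Matrix.mul_assoc]
      exact le_trans step2 step3
    · -- R (Tᴴ * A * Tᴴ) ≤ R Aᴴ
      have step1 : (R (Tᴴ * A * Tᴴ)) ≤ R (Tᴴ * A) := Rfactor rfl
      have step2 : (R (Tᴴ * A)) = R (Aᴴ * T) := by
        rw [Rmap Tᴴ A, ha, ← Rmap, ← Matrix.mul_assoc, ← Matrix.mul_assoc, hPA]
      exact le_trans step1 (le_of_eq_of_le step2 (Rfactor rfl))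
  · rw [conjTranspose_conjTranspose]
    exact hb'

lemma main2 {T A : Matrix (Fin m) (Fin n) ℂ} {Ad : Matrix (Fin n) (Fin m) ℂ}
    (hT : T = T * Tᴴ * T) (hMP : IsMP A Ad) (h : IsTEP T A) : IsTEP T Adᴴ := by
  obtain ⟨ha, hb⟩ := h
  obtain ⟨h1, h2, h3, h4⟩ := hMP
  have m1 : Adᴴ * Aᴴ = A * Ad := by rw [← Matrix.conjTranspose_mul, h3]
  have m2 : Aᴴ * Adᴴ = Ad * A := by rw [← Matrix.conjTranspose_mul, h4]
  have e1 : Adᴴ = A * Ad * Adᴴ := by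
    conv_lhs => rw [← h2]
    rw [show Ad * A * Ad = Ad * (A * Ad) by rw [Matrix.mul_assoc],
      Matrix.conjTranspose_mul, h3]
  have e2 : A = Adᴴ * Aᴴ * A := by rw [m1, h1]
  have e3 : Ad = Aᴴ * Adᴴ * Ad := by rw [m2, h2]
  have e4 : Ad * (A * Aᴴ) = Aᴴ := by
    rw [← Matrix.mul_assoc, ← m2]
    conv_rhs => rw [← h1]
    simp [Matrix.conjTranspose_mul, Matrix.mul_assoc]
  have hQ : (T * Tᴴ) * (T * Tᴴ) = T * Tᴴ := by rw [← Matrix.mul_assoc, ← hT]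
  have hRTQ : (R T) ≤ R (T * Tᴴ) :=
    Rfactor (show T = (T * Tᴴ) * T by rw [Matrix.mul_assoc, ← Matrix.mul_assoc, ← hT])
  have hRA : (R A) ≤ R (T * Tᴴ) := by
    rw [ha]
    exact le_trans (Rfactor (show T * Aᴴ * T = T * (Aᴴ * T) by rw [Matrix.mul_assoc])) hRTQ
  have hQA : (T * Tᴴ) * A = A := proj_fix hQ hRA
  have hRAdH : (R Adᴴ) = R A :=
    le_antisymm
      (Rfactor (show Adᴴ = A * (Ad * Adᴴ) by rw [← Matrix.mul_assoc, ← e1]))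
      (Rfactor (show A = Adᴴ * (Aᴴ * A) by rw [← Matrix.mul_assoc, ← e2]))
  have hQAd : (T * Tᴴ) * Adᴴ = Adᴴ := proj_fix hQ (hRAdH.le.trans hRA)
  have hPA : Tᴴ * T * Aᴴ = Aᴴ := by
    conv_rhs => rw [hb]
    simp [Matrix.conjTranspose_mul, Matrix.mul_assoc]
  constructor
  · rw [conjTranspose_conjTranspose]
    apply le_antisymm
    · -- R Adᴴ ≤ R (T * Ad * T)
      rw [hRAdH, ha]
      refine Rfactor (show T * Aᴴ * T = (T * Ad * T) * (Tᴴ * (A * (Aᴴ * T))) from ?_)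
      calc T * Aᴴ * T
          = T * (Ad * (A * Aᴴ)) * T := by rw [e4]
        _ = T * Ad * ((T * Tᴴ) * A) * Aᴴ * T := by rw [hQA]; simp only [Matrix.mul_assoc]
        _ = T * Ad * T * (Tᴴ * (A * (Aᴴ * T))) := by simp only [Matrix.mul_assoc]
    · -- R (T * Ad * T) ≤ R Adᴴ
      rw [hRAdH, ha]
      refine Rfactor (show T * Ad * T = (T * Aᴴ * T) * (Tᴴ * (Adᴴ * (Ad * T))) from ?_)
      calc T * Ad * T
          = T * (Aᴴ * Adᴴ * Ad) * T := by rw [← e3]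
        _ = T * Aᴴ * ((T * Tᴴ) * Adᴴ) * Ad * T := by rw [hQAd]; simp only [Matrix.mul_assoc]
        _ = T * Aᴴ * T * (Tᴴ * (Adᴴ * (Ad * T))) := by simp only [Matrix.mul_assoc]
  · -- Adᴴ = Adᴴ * Tᴴ * T
    have hPAd : (Tᴴ * T) * Ad = Ad := by
      conv_lhs => rw [e3]
      rw [← Matrix.mul_assoc, ← Matrix.mul_assoc, hPA, ← e3]
    calc Adᴴ = ((Tᴴ * T) * Ad)ᴴ := by rw [hPAd]
      _ = Adᴴ * Tᴴ * T := by
          simp [Matrix.conjTranspose_mul, Matrix.mul_assoc]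

end Main

theorem stmt12 {m n : ℕ} (A T : Matrix (Fin m) (Fin n) ℂ)
    (Ad : Matrix (Fin n) (Fin m) ℂ) (hT : T = T * Tᴴ * T) (hMP : IsMP A Ad) :
    (IsTEP T A ↔ IsTEP Tᴴ Aᴴ) ∧ (IsTEP T A ↔ IsTEP Tᴴ Ad) := by
  have hT' : Tᴴ = Tᴴ * Tᴴᴴ * Tᴴ := by
    conv_lhs => rw [hT]
    simp [Matrix.conjTranspose_mul, Matrix.mul_assoc]
  have hMP' : IsMP Adᴴ Aᴴ := by
    obtain ⟨h1, h2, h3, h4⟩ := hMP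
    refine ⟨?_, ?_, ?_, ?_⟩
    · rw [← Matrix.conjTranspose_mul, ← Matrix.conjTranspose_mul, ← Matrix.mul_assoc, h2]
    · rw [← Matrix.conjTranspose_mul, ← Matrix.conjTranspose_mul, ← Matrix.mul_assoc, h1]
    · rw [← Matrix.conjTranspose_mul, conjTranspose_conjTranspose]
      exact h3.symm
    · rw [← Matrix.conjTranspose_mul, conjTranspose_conjTranspose]
      exact h4.symm
  have iff1 : IsTEP T A ↔ IsTEP Tᴴ Aᴴ := by
    constructor
    · exact main1 hT
    · intro h
      have := main1 hT' h
      simpa using this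
  have iff2a : IsTEP T A ↔ IsTEP T Adᴴ := by
    constructor
    · exact main2 hT hMP
    · intro h
      have := main2 hT hMP' h
      simpa using this
  have iff2b : IsTEP T Adᴴ ↔ IsTEP Tᴴ Ad := by
    constructor
    · intro h
      have := main1 hT h
      simpa using this
    · intro h
      have := main1 hT' h
      simpa using this
  exact ⟨iff1, iff2a.trans iff2b⟩
end

section
/- Let T be an n×n unitary matrix. Then an n×n complex matrix A is T-EP if and only if A T* is EP, if and only if T A† A = A A† T. -/
open Matrix

lemma matrix_ext_mulVec {n : ℕ} {M N : Matrix (Fin n) (Fin n) ℂ}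
    (h : ∀ x, M *ᵥ x = N *ᵥ x) : M = N := by
  ext i j
  have := congrFun (h (Pi.single j 1)) i
  simpa [Matrix.mulVec_single] using this

lemma range_le_of_factor {n : ℕ} (M N C : Matrix (Fin n) (Fin n) ℂ) (h : M = N * C) :
    LinearMap.range (Matrix.mulVecLin M) ≤ LinearMap.range (Matrix.mulVecLin N) := by
  subst h
  rw [Matrix.mulVecLin_mul]
  exact LinearMap.range_comp_le_range _ _

lemma idem_absorb {n : ℕ} (M Q : Matrix (Fin n) (Fin n) ℂ) (hQ : Q * Q = Q)
    (h : LinearMap.range (Matrix.mulVecLin M) ≤ LinearMap.range (Matrix.mulVecLin Q)) :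
    Q * M = M := by
  apply matrix_ext_mulVec
  intro x
  obtain ⟨y, hy⟩ := h ⟨x, rfl⟩
  simp only [Matrix.mulVecLin_apply] at hy
  calc (Q * M) *ᵥ x = Q *ᵥ (M *ᵥ x) := by rw [← Matrix.mulVec_mulVec]
    _ = Q *ᵥ (Q *ᵥ y) := by rw [hy]
    _ = (Q * Q) *ᵥ y := by rw [Matrix.mulVec_mulVec]
    _ = Q *ᵥ y := by rw [hQ]
    _ = M *ᵥ x := hy

/-- Uniqueness of the Moore-Penrose inverse. -/
lemma mp_unique {n : ℕ} {B X Y : Matrix (Fin n) (Fin n) ℂ}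
    (hX : IsMP B X) (hY : IsMP B Y) : X = Y := by
  obtain ⟨hX1, hX2, hX3, hX4⟩ := hX
  obtain ⟨hY1, hY2, hY3, hY4⟩ := hY
  have e1 : X * Xᴴ * Bᴴ = X := by
    calc X * Xᴴ * Bᴴ = X * (Xᴴ * Bᴴ) := by noncomm_ring
      _ = X * (B * X)ᴴ := by rw [Matrix.conjTranspose_mul]
      _ = X * (B * X) := by rw [hX3]
      _ = X * B * X := by noncomm_ring
      _ = X := hX2
  have e2 : Bᴴ * B * Y = Bᴴ := by
    calc Bᴴ * B * Y = Bᴴ * (B * Y) := by noncomm_ring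
      _ = Bᴴ * (B * Y)ᴴ := by rw [hY3]
      _ = (B * Y * B)ᴴ := (Matrix.conjTranspose_mul (B * Y) B).symm
      _ = Bᴴ := by rw [hY1]
  have hXeq : X = X * B * Y := by
    calc X = X * Xᴴ * Bᴴ := e1.symm
      _ = X * Xᴴ * (Bᴴ * B * Y) := by rw [e2]
      _ = (X * Xᴴ * Bᴴ) * B * Y := by noncomm_ring
      _ = X * B * Y := by rw [e1]
  have e3 : Bᴴ * Yᴴ * Y = Y := by
    calc Bᴴ * Yᴴ * Y = (Y * B)ᴴ * Y := by rw [Matrix.conjTranspose_mul]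
      _ = Y * B * Y := by rw [hY4]
      _ = Y := hY2
  have e4 : X * B * Bᴴ = Bᴴ := by
    calc X * B * Bᴴ = (X * B)ᴴ * Bᴴ := by rw [hX4]
      _ = (B * (X * B))ᴴ := (Matrix.conjTranspose_mul B (X * B)).symm
      _ = (B * X * B)ᴴ := by rw [Matrix.mul_assoc]
      _ = Bᴴ := by rw [hX1]
  have hYeq : Y = X * B * Y := by
    calc Y = Bᴴ * Yᴴ * Y := e3.symm
      _ = (X * B * Bᴴ) * Yᴴ * Y := by rw [e4]
      _ = X * B * (Bᴴ * Yᴴ * Y) := by noncomm_ring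
      _ = X * B * Y := by rw [e3]
  rw [hXeq, ← hYeq]

theorem stmt15 {n : ℕ} (A T : Matrix (Fin n) (Fin n) ℂ)
    (Ad : Matrix (Fin n) (Fin n) ℂ) (hU1 : T * Tᴴ = 1) (hU2 : Tᴴ * T = 1)
    (hMP : IsMP A Ad) :
    (IsTEP T A ↔
      ∃ Bd : Matrix (Fin n) (Fin n) ℂ, IsMP (A * Tᴴ) Bd ∧ A * Tᴴ * Bd = Bd * (A * Tᴴ)) ∧
    (IsTEP T A ↔ T * Ad * A = A * Ad * T) := by
  obtain ⟨h1, h2, h3, h4⟩ := hMP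
  have hPidem : (A * Ad) * (A * Ad) = A * Ad := by
    calc (A * Ad) * (A * Ad) = (A * Ad * A) * Ad := by noncomm_ring
      _ = A * Ad := by rw [h1]
  have hQidem : (T * Ad * A * Tᴴ) * (T * Ad * A * Tᴴ) = T * Ad * A * Tᴴ := by
    calc (T * Ad * A * Tᴴ) * (T * Ad * A * Tᴴ)
        = T * Ad * A * (Tᴴ * T) * (Ad * A * Tᴴ) := by noncomm_ring
      _ = T * (Ad * A * Ad) * (A * Tᴴ) := by rw [hU2]; noncomm_ring
      _ = T * Ad * A * Tᴴ := by rw [h2]; noncomm_ring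
  have hQherm : (T * Ad * A * Tᴴ)ᴴ = T * Ad * A * Tᴴ := by
    calc (T * Ad * A * Tᴴ)ᴴ = (T * (Ad * A) * Tᴴ)ᴴ := by rw [Matrix.mul_assoc T Ad A]
      _ = Tᴴᴴ * (T * (Ad * A))ᴴ := Matrix.conjTranspose_mul _ _
      _ = Tᴴᴴ * ((Ad * A)ᴴ * Tᴴ) := by rw [Matrix.conjTranspose_mul T (Ad * A)]
      _ = T * (Ad * A * Tᴴ) := by rw [Matrix.conjTranspose_conjTranspose, h4]
      _ = T * Ad * A * Tᴴ := by noncomm_ring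
  have fA1 : A = (A * Ad) * A := h1.symm
  have hAdAAh : Ad * A * Aᴴ = Aᴴ := by
    calc Ad * A * Aᴴ = (Ad * A)ᴴ * Aᴴ := by rw [h4]
      _ = (A * (Ad * A))ᴴ := (Matrix.conjTranspose_mul A (Ad * A)).symm
      _ = (A * Ad * A)ᴴ := by rw [Matrix.mul_assoc]
      _ = Aᴴ := by rw [h1]
  have fQ1 : T * Aᴴ * T = (T * Ad * A * Tᴴ) * (T * Aᴴ * T) := by
    calc T * Aᴴ * T = T * (Ad * A * Aᴴ) * T := by rw [hAdAAh]
      _ = T * Ad * A * (Tᴴ * T) * (Aᴴ * T) := by rw [hU2]; noncomm_ring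
      _ = (T * Ad * A * Tᴴ) * (T * Aᴴ * T) := by noncomm_ring
  have hAhAdh : Aᴴ * Adᴴ = Ad * A := by
    rw [← Matrix.conjTranspose_mul, h4]
  have fQ2 : T * Ad * A * Tᴴ = (T * Aᴴ * T) * (Tᴴ * Adᴴ * Ad * A * Tᴴ) := by
    calc T * Ad * A * Tᴴ = T * (Ad * A * Ad) * A * Tᴴ := by rw [h2]
      _ = T * (Aᴴ * Adᴴ) * Ad * A * Tᴴ := by rw [hAhAdh]; noncomm_ring
      _ = T * Aᴴ * (T * Tᴴ) * (Adᴴ * Ad * A * Tᴴ) := by rw [hU1]; noncomm_ring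
      _ = (T * Aᴴ * T) * (Tᴴ * Adᴴ * Ad * A * Tᴴ) := by noncomm_ring
  have hrangeA : LinearMap.range (Matrix.mulVecLin A)
      = LinearMap.range (Matrix.mulVecLin (A * Ad)) :=
    le_antisymm (range_le_of_factor _ _ _ fA1) (range_le_of_factor _ _ _ rfl)
  have hrangeQ : LinearMap.range (Matrix.mulVecLin (T * Aᴴ * T))
      = LinearMap.range (Matrix.mulVecLin (T * Ad * A * Tᴴ)) :=
    le_antisymm (range_le_of_factor _ _ _ fQ1) (range_le_of_factor _ _ _ fQ2)
  have hcentral : IsTEP T A ↔ A * Ad = T * Ad * A * Tᴴ := by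
    constructor
    · rintro ⟨hr, -⟩
      rw [hrangeA, hrangeQ] at hr
      have hQP : (T * Ad * A * Tᴴ) * (A * Ad) = A * Ad :=
        idem_absorb _ _ hQidem hr.le
      have hPQ : (A * Ad) * (T * Ad * A * Tᴴ) = T * Ad * A * Tᴴ :=
        idem_absorb _ _ hPidem hr.ge
      calc A * Ad = (A * Ad)ᴴ := h3.symm
        _ = ((T * Ad * A * Tᴴ) * (A * Ad))ᴴ := by rw [hQP]
        _ = (A * Ad)ᴴ * (T * Ad * A * Tᴴ)ᴴ := by rw [Matrix.conjTranspose_mul]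
        _ = (A * Ad) * (T * Ad * A * Tᴴ) := by rw [h3, hQherm]
        _ = T * Ad * A * Tᴴ := hPQ
    · intro hpq
      refine ⟨?_, ?_⟩
      · rw [hrangeA, hrangeQ, hpq]
      · rw [Matrix.mul_assoc, hU2, Matrix.mul_one]
  have hcentral2 : A * Ad = T * Ad * A * Tᴴ ↔ T * Ad * A = A * Ad * T := by
    constructor
    · intro h
      calc T * Ad * A = T * Ad * A * (Tᴴ * T) := by rw [hU2, Matrix.mul_one]
        _ = (T * Ad * A * Tᴴ) * T := by noncomm_ring
        _ = A * Ad * T := by rw [← h]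
    · intro h
      calc A * Ad = A * Ad * (T * Tᴴ) := by rw [hU1, Matrix.mul_one]
        _ = (A * Ad * T) * Tᴴ := by noncomm_ring
        _ = (T * Ad * A) * Tᴴ := by rw [← h]
  have hBB : A * Tᴴ * (T * Ad) = A * Ad := by
    calc A * Tᴴ * (T * Ad) = A * (Tᴴ * T) * Ad := by noncomm_ring
      _ = A * Ad := by rw [hU2, Matrix.mul_one]
  have hBB2 : T * Ad * (A * Tᴴ) = T * Ad * A * Tᴴ := by noncomm_ring
  have hMPB : IsMP (A * Tᴴ) (T * Ad) := by
    refine ⟨?_, ?_, ?_, ?_⟩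
    · calc A * Tᴴ * (T * Ad) * (A * Tᴴ) = (A * Ad) * (A * Tᴴ) := by rw [hBB]
        _ = (A * Ad * A) * Tᴴ := by noncomm_ring
        _ = A * Tᴴ := by rw [h1]
    · calc T * Ad * (A * Tᴴ) * (T * Ad) = T * Ad * A * (Tᴴ * T) * Ad := by noncomm_ring
        _ = T * (Ad * A * Ad) := by rw [hU2]; noncomm_ring
        _ = T * Ad := by rw [h2]
    · rw [hBB, h3]
    · rw [hBB2, hQherm]
  constructor
  · rw [hcentral]
    constructor
    · intro hpq
      exact ⟨T * Ad, hMPB, by rw [hBB, hBB2, hpq]⟩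
    · rintro ⟨Bd, hBd, hcomm⟩
      have hb : Bd = T * Ad := mp_unique hBd hMPB
      rw [hb, hBB, hBB2] at hcomm
      exact hcomm
  · rw [hcentral, hcentral2]
end

section
/- Let T be an n×n orthogonal projector (T = T* = T²). Then A is T-EP if and only if A is EP and A = A T. -/
open Matrix

/-- Two matrices with equal `mulVec` are equal. -/
lemma eq_of_mulVec_eq {n : ℕ} {M N : Matrix (Fin n) (Fin n) ℂ}
    (h : ∀ v, M *ᵥ v = N *ᵥ v) : M = N := by
  ext i j
  have := congrFun (h (Pi.single j 1)) i
  simpa using this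

/-- If the range of A is contained in the range of an idempotent T, then T * A = A. -/
lemma idem_absorb_s16 {n : ℕ} (T A : Matrix (Fin n) (Fin n) ℂ) (hIdem : T * T = T)
    (hr : LinearMap.range (Matrix.mulVecLin A) ≤ LinearMap.range (Matrix.mulVecLin T)) :
    T * A = A := by
  apply eq_of_mulVec_eq
  intro v
  obtain ⟨u, hu⟩ := hr ⟨v, rfl⟩
  simp only [mulVecLin_apply] at hu
  calc (T * A) *ᵥ v = T *ᵥ (A *ᵥ v) := by rw [mulVec_mulVec]
    _ = T *ᵥ (T *ᵥ u) := by rw [hu]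
    _ = (T * T) *ᵥ u := by rw [mulVec_mulVec]
    _ = T *ᵥ u := by rw [hIdem]
    _ = A *ᵥ v := hu

theorem stmt16 {n : ℕ} (A T : Matrix (Fin n) (Fin n) ℂ)
    (hH : T = Tᴴ) (hIdem : T * T = T) :
    IsTEP T A ↔
      (LinearMap.range (Matrix.mulVecLin A) = LinearMap.range (Matrix.mulVecLin Aᴴ) ∧
        A = A * T) := by
  have hTT : A * Tᴴ * T = A * T := by rw [← hH, mul_assoc, hIdem]
  constructor
  · rintro ⟨h1, h2⟩
    rw [hTT] at h2
    -- range (T Aᴴ T) ≤ range T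
    have hsub : LinearMap.range (Matrix.mulVecLin (T * Aᴴ * T)) ≤
        LinearMap.range (Matrix.mulVecLin T) := by
      rintro x ⟨v, rfl⟩
      exact ⟨(Aᴴ * T) *ᵥ v, by simp [mulVecLin_apply, mulVec_mulVec, mul_assoc]⟩
    have hTA : T * A = A := idem_absorb_s16 T A hIdem (h1 ▸ hsub)
    -- Aᴴ T = Aᴴ and T Aᴴ = Aᴴ
    have hAHT : Aᴴ * T = Aᴴ := by
      calc Aᴴ * T = Aᴴ * Tᴴ := by rw [← hH]
        _ = (T * A)ᴴ := by rw [conjTranspose_mul]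
        _ = Aᴴ := by rw [hTA]
    have hTAH : T * Aᴴ = Aᴴ := by
      calc T * Aᴴ = Tᴴ * Aᴴ := by rw [← hH]
        _ = (A * T)ᴴ := by rw [conjTranspose_mul]
        _ = Aᴴ := by rw [← h2]
    have : T * Aᴴ * T = Aᴴ := by rw [hTAH, hAHT]
    rw [this] at h1
    exact ⟨h1, h2⟩
  · rintro ⟨h1, h2⟩
    have hTAH : T * Aᴴ = Aᴴ := by
      calc T * Aᴴ = Tᴴ * Aᴴ := by rw [← hH]
        _ = (A * T)ᴴ := by rw [conjTranspose_mul]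
        _ = Aᴴ := by rw [← h2]
    have hsub : LinearMap.range (Matrix.mulVecLin Aᴴ) ≤
        LinearMap.range (Matrix.mulVecLin T) := by
      rintro x ⟨v, rfl⟩
      exact ⟨Aᴴ *ᵥ v, by simp [mulVecLin_apply, mulVec_mulVec, hTAH]⟩
    have hTA : T * A = A := idem_absorb_s16 T A hIdem (by rw [h1]; exact hsub)
    have hAHT : Aᴴ * T = Aᴴ := by
      calc Aᴴ * T = Aᴴ * Tᴴ := by rw [← hH]
        _ = (T * A)ᴴ := by rw [conjTranspose_mul]
        _ = Aᴴ := by rw [hTA]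
    have : T * Aᴴ * T = Aᴴ := by rw [hTAH, hAHT]
    exact ⟨by rw [this, h1], by rw [hTT, ← h2]⟩
end

section
/- Let T be an n×n normal partial isometry. If A = T T* A, then (T A)† = A† T*, and consequently A† = (T A)† T. -/
open Matrix

theorem stmt17 {n : ℕ} (A T : Matrix (Fin n) (Fin n) ℂ)
    (Ad : Matrix (Fin n) (Fin n) ℂ) (hT : T = T * Tᴴ * T) (hN : T * Tᴴ = Tᴴ * T)
    (hMP : IsMP A Ad) (hA : A = T * Tᴴ * A) :
    IsMP (T * A) (Ad * Tᴴ) ∧ Ad = Ad * Tᴴ * T := by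
  obtain ⟨h1, h2, h3, h4⟩ := hMP
  have hTTA : Tᴴ * T * A = A := by rw [← hN, ← hA]
  -- Ad = Ad * Adᴴ * Aᴴ
  have hAd1 : Ad = Ad * Adᴴ * Aᴴ := by
    calc Ad = Ad * A * Ad := h2.symm
    _ = Ad * (A * Ad) := by rw [Matrix.mul_assoc]
    _ = Ad * (A * Ad)ᴴ := by rw [h3]
    _ = Ad * Adᴴ * Aᴴ := by rw [Matrix.conjTranspose_mul, Matrix.mul_assoc]
  have hAdTT : Ad * (T * Tᴴ) = Ad := by
    calc Ad * (T * Tᴴ) = Ad * Adᴴ * Aᴴ * (T * Tᴴ) := by rw [← hAd1]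
    _ = Ad * Adᴴ * (Aᴴ * (T * Tᴴ)) := by rw [Matrix.mul_assoc]
    _ = Ad * Adᴴ * Aᴴ := by
        congr 1
        calc Aᴴ * (T * Tᴴ) = (T * Tᴴ * A)ᴴ := by
              simp [Matrix.conjTranspose_mul, Matrix.mul_assoc]
        _ = Aᴴ := by rw [← hA]
    _ = Ad := hAd1.symm
  have key : Ad = Ad * Tᴴ * T := by rw [Matrix.mul_assoc, ← hN, hAdTT]
  refine ⟨⟨?_, ?_, ?_, ?_⟩, key⟩
  · calc T * A * (Ad * Tᴴ) * (T * A) = T * (A * Ad) * (Tᴴ * T * A) := by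
          simp only [Matrix.mul_assoc]
    _ = T * (A * Ad) * A := by rw [hTTA]
    _ = T * A := by rw [Matrix.mul_assoc, h1]
  · calc Ad * Tᴴ * (T * A) * (Ad * Tᴴ) = Ad * Tᴴ * T * A * Ad * Tᴴ := by
          simp only [Matrix.mul_assoc]
    _ = Ad * A * Ad * Tᴴ := by rw [← key]
    _ = Ad * Tᴴ := by rw [h2]
  · calc (T * A * (Ad * Tᴴ))ᴴ = T * (A * Ad)ᴴ * Tᴴ := by
          simp only [Matrix.conjTranspose_mul, Matrix.conjTranspose_conjTranspose,
            Matrix.mul_assoc]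
    _ = T * A * (Ad * Tᴴ) := by rw [h3]; simp only [Matrix.mul_assoc]
  · calc (Ad * Tᴴ * (T * A))ᴴ = (Ad * Tᴴ * T * A)ᴴ := by simp only [Matrix.mul_assoc]
    _ = (Ad * A)ᴴ := by rw [← key]
    _ = Ad * A := h4
    _ = Ad * Tᴴ * T * A := by rw [← key]
    _ = Ad * Tᴴ * (T * A) := by simp only [Matrix.mul_assoc]
end

section
/- Let T be an n×n hermitian partial isometry. Then A is T-EP if and only if T A is EP and A = A T² = T² A. -/
open Matrix

namespace Stmt18Aux

noncomputable section

variable {n : ℕ}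

lemma mulvec_ext {M N : Matrix (Fin n) (Fin n) ℂ} (h : ∀ v, M *ᵥ v = N *ᵥ v) : M = N := by
  have h2 : M.mulVecLin = N.mulVecLin := LinearMap.ext fun v => by simpa using h v
  rw [← Matrix.toLin'_apply', ← Matrix.toLin'_apply'] at h2
  exact Matrix.toLin'.injective h2

lemma toE_mul (M N : Matrix (Fin n) (Fin n) ℂ) :
    toEuclideanLin (M * N) = (toEuclideanLin M) ∘ₗ (toEuclideanLin N) := by
  simp [Matrix.toEuclideanLin_eq_toLin,
    Matrix.toLin_mul (PiLp.basisFun 2 ℂ (Fin n)) (PiLp.basisFun 2 ℂ (Fin n))]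

lemma toE_decomp (M : Matrix (Fin n) (Fin n) ℂ) :
    (toEuclideanLin M : EuclideanSpace ℂ (Fin n) →ₗ[ℂ] _) =
      (WithLp.linearEquiv 2 ℂ (Fin n → ℂ)).symm.toLinearMap ∘ₗ M.mulVecLin ∘ₗ
        (WithLp.linearEquiv 2 ℂ (Fin n → ℂ)).toLinearMap := by
  ext v
  simp [Matrix.toEuclideanLin_apply, Matrix.mulVecLin_apply]

lemma range_toE (M : Matrix (Fin n) (Fin n) ℂ) :
    LinearMap.range (toEuclideanLin M : EuclideanSpace ℂ (Fin n) →ₗ[ℂ] _)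
      = (LinearMap.range M.mulVecLin).map
          (WithLp.linearEquiv 2 ℂ (Fin n → ℂ)).symm.toLinearMap := by
  rw [toE_decomp, LinearMap.range_comp, LinearMap.range_comp, LinearEquiv.range,
    Submodule.map_top]

lemma range_iff (M N : Matrix (Fin n) (Fin n) ℂ) :
    LinearMap.range M.mulVecLin = LinearMap.range N.mulVecLin ↔
    LinearMap.range (toEuclideanLin M : EuclideanSpace ℂ (Fin n) →ₗ[ℂ] _)
      = LinearMap.range (toEuclideanLin N) := by
  rw [range_toE, range_toE]
  constructor
  · intro h; rw [h]
  · intro h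
    exact Submodule.map_injective_of_injective
      (f := (WithLp.linearEquiv 2 ℂ (Fin n → ℂ)).symm.toLinearMap)
      (WithLp.linearEquiv 2 ℂ (Fin n → ℂ)).symm.injective h

lemma ker_eq_orth (f : EuclideanSpace ℂ (Fin n) →ₗ[ℂ] EuclideanSpace ℂ (Fin n)) :
    LinearMap.ker f = (LinearMap.range (LinearMap.adjoint f))ᗮ := by
  ext x
  simp only [LinearMap.mem_ker, Submodule.mem_orthogonal]
  constructor
  · rintro hx u ⟨y, rfl⟩
    rw [LinearMap.adjoint_inner_left, hx, inner_zero_right]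
  · intro h
    have := h (LinearMap.adjoint f (f x)) ⟨f x, rfl⟩
    rw [LinearMap.adjoint_inner_left] at this
    exact inner_self_eq_zero.mp this

lemma ep_exists (B : Matrix (Fin n) (Fin n) ℂ)
    (h : LinearMap.range B.mulVecLin = LinearMap.range Bᴴ.mulVecLin) :
    ∃ Bd, IsMP B Bd ∧ B * Bd = Bd * B := by
  classical
  have hE := (range_iff B Bᴴ).mp h
  set f : EuclideanSpace ℂ (Fin n) →ₗ[ℂ] EuclideanSpace ℂ (Fin n) := toEuclideanLin B with hf
  set U : Submodule ℂ (EuclideanSpace ℂ (Fin n)) := LinearMap.range f with hU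
  have hker : LinearMap.ker f = Uᗮ := by
    rw [ker_eq_orth, ← Matrix.toEuclideanLin_conjTranspose_eq_adjoint, ← hE]
  set p : EuclideanSpace ℂ (Fin n) →ₗ[ℂ] EuclideanSpace ℂ (Fin n) :=
    U.subtype ∘ₗ (U.orthogonalProjectionOnto).toLinearMap with hp
  have hpap : ∀ x, p x = (U.orthogonalProjectionOnto x : EuclideanSpace ℂ (Fin n)) := fun x => rfl
  have hpmem : ∀ x, p x ∈ U := fun x => (U.orthogonalProjectionOnto x).2
  have hpid : ∀ x ∈ U, p x = x := fun x hx => by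
    rw [hpap]; exact Submodule.starProjection_eq_self_iff.mpr hx
  set P : Matrix (Fin n) (Fin n) ℂ := Matrix.toEuclideanLin.symm p with hP
  have hPp : toEuclideanLin P = p := Matrix.toEuclideanLin.apply_symm_apply p
  have toE_inj : Function.Injective (toEuclideanLin : Matrix (Fin n) (Fin n) ℂ → _) :=
    Matrix.toEuclideanLin.injective
  have hPH : Pᴴ = P := by
    apply toE_inj
    rw [Matrix.toEuclideanLin_conjTranspose_eq_adjoint, hPp]
    apply (LinearMap.eq_adjoint_iff p p).mpr ?_ |>.symm
    intro x y
    rw [hpap, hpap]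
    exact Submodule.inner_starProjection_left_eq_right U x y
  have hPP : P * P = P := by
    apply toE_inj
    rw [toE_mul, hPp]
    exact LinearMap.ext fun x => hpid (p x) (hpmem x)
  have hPB : P * B = B := by
    apply toE_inj
    rw [toE_mul, hPp, ← hf]
    exact LinearMap.ext fun x => hpid (f x) ⟨x, rfl⟩
  have hBP : B * P = B := by
    apply toE_inj
    rw [toE_mul, hPp, ← hf]
    refine LinearMap.ext fun x => ?_
    have hmem : x - p x ∈ LinearMap.ker f := by
      rw [hker, hpap]
      exact Submodule.sub_starProjection_mem_orthogonal (K := U) x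
    have h0 : f (x - p x) = 0 := hmem
    rw [map_sub, sub_eq_zero] at h0
    exact h0.symm
  set C : Matrix (Fin n) (Fin n) ℂ := B + 1 - P with hC
  have hdet : IsUnit C.det := by
    rw [isUnit_iff_ne_zero]
    intro hd
    obtain ⟨v, hv0, hv⟩ := (Matrix.exists_mulVec_eq_zero_iff).mpr hd
    set x : EuclideanSpace ℂ (Fin n) := (WithLp.equiv 2 (Fin n → ℂ)).symm v with hx
    have hCx : toEuclideanLin C x = 0 := by
      rw [Matrix.toEuclideanLin_apply]
      simp [hx, hv]
    have hCdecomp : toEuclideanLin C = f + LinearMap.id - p := by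
      rw [hC]
      have h1 : toEuclideanLin (B + 1 - P)
          = toEuclideanLin B + toEuclideanLin 1 - toEuclideanLin P := by
        simp [map_sub, map_add]
      rw [h1, hPp, ← hf]
      congr 1
      congr 1
      ext y
      simp [Matrix.toEuclideanLin_apply]
    rw [hCdecomp] at hCx
    have hCx' : f x + x - p x = 0 := by simpa using hCx
    have hfx : f x = 0 := by
      have := congrArg p hCx'
      rw [map_sub, map_add, hpid (f x) ⟨x, rfl⟩, hpid (p x) (hpmem x), map_zero] at this
      simpa using this
    have hxp : x = p x := by
      have := hCx'
      rw [hfx, zero_add, sub_eq_zero] at this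
      exact this
    have hxU : x ∈ U := hxp ▸ hpmem x
    have hxOrth : x ∈ Uᗮ := by rw [← hker]; exact hfx
    have hx0 : x = 0 := by
      have h0 := (Submodule.mem_orthogonal U x).mp hxOrth x hxU
      exact inner_self_eq_zero.mp h0
    exact hv0 (by simpa [hx] using congrArg (WithLp.equiv 2 (Fin n → ℂ)) hx0)
  have hCiC : C⁻¹ * C = 1 := Matrix.nonsing_inv_mul C hdet
  have hCCi : C * C⁻¹ = 1 := Matrix.mul_nonsing_inv C hdet
  have hCP : C * P = B := by
    rw [hC, sub_mul, add_mul, one_mul, hBP, hPP, add_sub_cancel_right]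
  have hPC : P * C = B := by
    rw [hC, mul_sub, mul_add, mul_one, hPB, hPP, add_sub_cancel_right]
  have hBCi : B * C⁻¹ = P := by
    rw [← hPC, mul_assoc, hCCi, mul_one]
  have hCiB : C⁻¹ * B = P := by
    rw [← hCP, ← mul_assoc, hCiC, one_mul]
  have hcommP : P * C⁻¹ = C⁻¹ * P := by
    have h1 : P * C⁻¹ = C⁻¹ * B * C⁻¹ := by rw [hCiB]
    have h2 : C⁻¹ * P = C⁻¹ * B * C⁻¹ := by
      rw [mul_assoc, ← hBCi, ← mul_assoc, hCiB]
    rw [h1, h2]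
  have hBBd : B * (C⁻¹ * P) = P := by rw [← mul_assoc, hBCi, hPP]
  have hBdB : C⁻¹ * P * B = P := by rw [mul_assoc, hPB, hCiB]
  refine ⟨C⁻¹ * P, ⟨?_, ?_, ?_, ?_⟩, ?_⟩ <;> (try simp only [← mul_assoc])
  · rw [hBCi, hPP, hPB]
  · rw [hBdB, hcommP, mul_assoc, hPP]
  · rw [hBCi, hPP, hPH]
  · rw [hBdB, hPH]
  · rw [hBCi, hPP, hBdB]

lemma rmul (M N : Matrix (Fin n) (Fin n) ℂ) :
    LinearMap.range (M * N).mulVecLin = (LinearMap.range N.mulVecLin).map M.mulVecLin := by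
  rw [Matrix.mulVecLin_mul, LinearMap.range_comp]

lemma rle (M N : Matrix (Fin n) (Fin n) ℂ) :
    LinearMap.range (M * N).mulVecLin ≤ LinearMap.range M.mulVecLin := by
  rw [Matrix.mulVecLin_mul]
  exact LinearMap.range_comp_le_range _ _

end

end Stmt18Aux

open Stmt18Aux in
theorem stmt18 {n : ℕ} (A T : Matrix (Fin n) (Fin n) ℂ)
    (hT : T = T * Tᴴ * T) (hH : T = Tᴴ) :
    IsTEP T A ↔
      ((∃ Bd : Matrix (Fin n) (Fin n) ℂ,
          IsMP (T * A) Bd ∧ T * A * Bd = Bd * (T * A)) ∧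
        A = A * (T * T) ∧ A = T * T * A) := by
  have hT' := hT
  rw [← hH] at hT'
  have hT3 : T * T * T = T := hT'.symm
  constructor
  · rintro ⟨h1, h2⟩
    rw [← hH] at h2
    have hA2 : A = A * (T * T) := by rw [← mul_assoc]; exact h2
    -- range A ≤ range T
    have h1' : LinearMap.range A.mulVecLin
        = LinearMap.range (T * (Aᴴ * T)).mulVecLin := by
      rw [← mul_assoc]; exact h1
    have hsub : LinearMap.range A.mulVecLin ≤ LinearMap.range T.mulVecLin := by
      rw [h1']; exact rle T (Aᴴ * T)
    have hA3 : A = T * T * A := by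
      apply mulvec_ext
      intro v
      have hmem : A *ᵥ v ∈ LinearMap.range T.mulVecLin := hsub ⟨v, rfl⟩
      obtain ⟨y, hy⟩ := hmem
      have hy' : T *ᵥ y = A *ᵥ v := hy
      calc A *ᵥ v = T *ᵥ y := hy'.symm
        _ = (T * T * T) *ᵥ y := by rw [hT3]
        _ = T *ᵥ (T *ᵥ (T *ᵥ y)) := by rw [Matrix.mulVec_mulVec, Matrix.mulVec_mulVec]
        _ = (T * T) *ᵥ (A *ᵥ v) := by rw [hy', Matrix.mulVec_mulVec]
        _ = (T * T * A) *ᵥ v := by rw [Matrix.mulVec_mulVec]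
    refine ⟨?_, hA2, hA3⟩
    -- T*A is EP
    have hAH : T * T * Aᴴ = Aᴴ := by
      conv_rhs => rw [hA2]
      rw [conjTranspose_mul, conjTranspose_mul, ← hH]
    apply ep_exists
    have e1 : (T * A)ᴴ = Aᴴ * T := by rw [conjTranspose_mul, ← hH]
    rw [e1, rmul T A, h1', rmul T (Aᴴ * T), ← rmul, ← rmul]
    have e2 : T * (T * (Aᴴ * T)) = Aᴴ * T := by
      rw [show T * (T * (Aᴴ * T)) = T * T * Aᴴ * T by simp only [mul_assoc], hAH]
    rw [e2]
  · rintro ⟨⟨Bd, ⟨m1, m2, m3, m4⟩, hc⟩, hA2, hA3⟩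
    set B := T * A with hB
    have e1 : Bᴴ * Bdᴴ = Bd * B := by rw [← conjTranspose_mul, m4]
    have le1 : LinearMap.range B.mulVecLin ≤ LinearMap.range Bᴴ.mulVecLin := by
      calc LinearMap.range B.mulVecLin
          = LinearMap.range (B * Bd * B).mulVecLin := by rw [m1]
        _ ≤ LinearMap.range (B * Bd).mulVecLin := rle _ _
        _ = LinearMap.range (Bᴴ * Bdᴴ).mulVecLin := by rw [hc, ← e1]
        _ ≤ LinearMap.range Bᴴ.mulVecLin := rle _ _
    have e2 : Bᴴ = B * (Bd * Bᴴ) := by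
      have m1' : B * (Bd * B) = B := by rw [← mul_assoc]; exact m1
      have h3 := congrArg conjTranspose m1'
      rw [conjTranspose_mul, m4, ← hc, mul_assoc] at h3
      exact h3.symm
    have le2 : LinearMap.range Bᴴ.mulVecLin ≤ LinearMap.range B.mulVecLin := by
      calc LinearMap.range Bᴴ.mulVecLin
          = LinearMap.range (B * (Bd * Bᴴ)).mulVecLin := by rw [← e2]
        _ ≤ LinearMap.range B.mulVecLin := rle _ _
    have hBB := le_antisymm le1 le2
    constructor
    · have eH : (T * A)ᴴ = Aᴴ * T := by rw [conjTranspose_mul, ← hH]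
      calc LinearMap.range A.mulVecLin
          = LinearMap.range (T * T * A).mulVecLin := by rw [← hA3]
        _ = LinearMap.range (T * (T * A)).mulVecLin := by rw [mul_assoc]
        _ = (LinearMap.range B.mulVecLin).map T.mulVecLin := rmul T (T * A)
        _ = (LinearMap.range Bᴴ.mulVecLin).map T.mulVecLin := by rw [hBB]
        _ = LinearMap.range (T * (Aᴴ * T)).mulVecLin := by rw [← rmul, hB, eH]
        _ = LinearMap.range (T * Aᴴ * T).mulVecLin := by rw [mul_assoc]
    · rw [← hH, ← mul_assoc] at *
      exact hA2
end
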